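/- Let B be a closed formally normal operator with A := B*↾D(B), and suppose T is a normal extension of B with B ⊆ T ⊆ A* and T* ⊆ B*. If x₀, y₀ ∈ D(B), v₁ ∈ N(B*), u₂ ∈ N(A*) are such that the same vector z ∈ D(T) = D(T*) satisfies Tz = Bx₀ + v₁ and T*z = Ay₀ + u₂, then using normality of T and formal normality of B one has B(x₀ − y₀) = 0. -/

import Mathlib

open LinearPMap

variable {H : Type*} [NormedAddCommGroup H] [InnerProductSpace ℂ H] [CompleteSpace H]

local notation "⟪" x ", " y "⟫" => @inner ℂ _ _ x y

/-- A densely defined closed operator `N` is normal if `D(N) = D(N*)` and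
`‖Nz‖ = ‖N*z‖` on `D(N)`. -/
def IsNormalOp {H : Type*} [NormedAddCommGroup H] [InnerProductSpace ℂ H] [CompleteSpace H]
    (N : H →ₗ.[ℂ] H) : Prop :=
  Dense (N.domain : Set H) ∧ N.IsClosed ∧
    ∃ h : N.domain = (N†).domain,
      ∀ z : N.domain, ‖N z‖ = ‖(N†) ⟨(z : H), h ▸ z.2⟩‖

/-- Polarization: two linear maps into a complex inner product space with equal norms
have equal pairwise inner products. -/
theorem inner_eq_of_norm_eq' {D : Type*} [AddCommGroup D] [Module ℂ D]
    {H : Type*} [NormedAddCommGroup H] [InnerProductSpace ℂ H]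
    (L₁ L₂ : D →ₗ[ℂ] H) (h : ∀ z, ‖L₁ z‖ = ‖L₂ z‖) (z w : D) :
    ⟪L₁ z, L₁ w⟫ = ⟪L₂ z, L₂ w⟫ := by
  rw [inner_eq_sum_norm_sq_div_four, inner_eq_sum_norm_sq_div_four]
  simp only [← _root_.map_add, ← _root_.map_sub, ← _root_.map_smul, h]

/-- Let `B` be closed formally normal, `A := B*↾D(B)`, and `T` a normal
extension of `B` with `B ⊆ T ⊆ A*` and `T* ⊆ B*`. If `x₀, y₀ ∈ D(B)`, `v₁ ∈ N(B*)`,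
`u₂ ∈ N(A*)` and `z ∈ D(T) = D(T*)` satisfy `Tz = Bx₀ + v₁` and `T*z = Ay₀ + u₂`,
then `B(x₀ − y₀) = 0`. -/
theorem normality_forces_equal_components (B T : H →ₗ.[ℂ] H)
    (hB : Dense (B.domain : Set H)) (hBclosed : B.IsClosed)
    (hBsub : B.domain ≤ (B†).domain)
    (hBnorm : ∀ (x : H) (hx : x ∈ B.domain), ‖B ⟨x, hx⟩‖ = ‖(B†) ⟨x, hBsub hx⟩‖)
    (hT : IsNormalOp T) (hBT : B ≤ T) (hTA : T ≤ ((B†).domRestrict B.domain)†)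
    (hTsB : T† ≤ B†)
    (x₀ : B.domain) (y₀ : ((B†).domRestrict B.domain).domain)
    (v₁ u₂ : H)
    (hv₁ : (v₁, (0 : H)) ∈ (B†).graph)
    (hu₂ : (u₂, (0 : H)) ∈ (((B†).domRestrict B.domain)†).graph)
    (z : T.domain)
    (hTz : T z = B x₀ + v₁)
    (hTsz : ((z : H), ((B†).domRestrict B.domain) y₀ + u₂) ∈ (T†).graph) :
    ((x₀ : H) - (y₀ : H), (0 : H)) ∈ B.graph := by
  obtain ⟨hTd, hTc, hdom, hnorm⟩ := hT
  -- domain facts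
  have hy₀B : (y₀ : H) ∈ B.domain := y₀.2.1
  have hADdense : Dense ((((B†).domRestrict B.domain).domain : Submodule ℂ H) : Set H) := by
    have h1 : ((B†).domRestrict B.domain).domain = B.domain := inf_eq_left.mpr hBsub
    rw [h1]; exact hB
  -- the vector w = x₀ - y₀ in the various domains
  let wB : B.domain := x₀ - ⟨(y₀ : H), hy₀B⟩
  have hwBcoe : (wB : H) = (x₀ : H) - (y₀ : H) := rfl
  let wT : T.domain := ⟨(wB : H), hBT.1 wB.2⟩
  let wA : ((B†).domRestrict B.domain).domain := ⟨(wB : H), ⟨wB.2, hBsub wB.2⟩⟩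
  let x₀A : ((B†).domRestrict B.domain).domain := ⟨(x₀ : H), ⟨x₀.2, hBsub x₀.2⟩⟩
  -- normality of T as inner product identity
  have hTinner : ∀ a b : T.domain,
      ⟪T a, T b⟫ = ⟪(T†) ⟨(a : H), hdom.le a.2⟩, (T†) ⟨(b : H), hdom.le b.2⟩⟫ := by
    have key := inner_eq_of_norm_eq' T.toFun
      ((T†).toFun.comp (Submodule.inclusion hdom.le))
      (fun a => by exact hnorm a)
    intro a b
    exact key a b
  -- formal normality of B as inner product identity
  have hBinner : ∀ a b : B.domain,
      ⟪B a, B b⟫ = ⟪(B†) ⟨(a : H), hBsub a.2⟩, (B†) ⟨(b : H), hBsub b.2⟩⟫ := by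
    have key := inner_eq_of_norm_eq' B.toFun
      ((B†).toFun.comp (Submodule.inclusion hBsub))
      (fun a => by exact hBnorm a a.2)
    intro a b
    exact key a b
  -- T w = B w
  have hTw : T wT = B wB := (hBT.2 rfl).symm
  -- T† w = A w
  have hTsw : (T†) ⟨(wT : H), hdom.le wT.2⟩ = ((B†).domRestrict B.domain) wA := by
    have h1 : (T†) ⟨(wT : H), hdom.le wT.2⟩ = (B†) ⟨(wB : H), hBsub wB.2⟩ :=
      hTsB.2 rfl
    have h2 : ((B†).domRestrict B.domain) wA = (B†) ⟨(wB : H), hBsub wB.2⟩ :=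
      domRestrict_apply rfl
    rw [h1, h2]
  -- T† z = A y₀ + u₂
  have hTsz' : (T†) ⟨(z : H), hdom.le z.2⟩ = ((B†).domRestrict B.domain) y₀ + u₂ := by
    obtain ⟨y, hy1, hy2⟩ := (mem_graph_iff _).mp hTsz
    have hyz : y = ⟨(z : H), hdom.le z.2⟩ := Subtype.ext hy1
    rw [hyz] at hy2
    exact hy2
  -- ⟪v₁, B w⟫ = 0
  have hv0 : ⟪v₁, B wB⟫ = 0 := by
    obtain ⟨v, hv1, hv2⟩ := (mem_graph_iff _).mp hv₁
    have hfa := adjoint_isFormalAdjoint hB v wB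
    rw [hv2, hv1] at hfa
    simpa using hfa.symm
  -- ⟪u₂, A w⟫ = 0
  have hu0 : ⟪u₂, ((B†).domRestrict B.domain) wA⟫ = 0 := by
    obtain ⟨u, hu1, hu2⟩ := (mem_graph_iff _).mp hu₂
    have hfa := adjoint_isFormalAdjoint hADdense u wA
    rw [hu2, hu1] at hfa
    simpa using hfa.symm
  -- main identity from normality of T
  have key : ⟪B x₀, B wB⟫
      = ⟪((B†).domRestrict B.domain) y₀, ((B†).domRestrict B.domain) wA⟫ := by
    have h := hTinner z wT
    rw [hTz, hTw, hTsz', hTsw, inner_add_left, inner_add_left, hv0, hu0] at h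
    simpa using h
  -- formal normality: ⟪A x₀, A w⟫ = ⟪A y₀, A w⟫
  have key2 : ⟪((B†).domRestrict B.domain) x₀A, ((B†).domRestrict B.domain) wA⟫
      = ⟪((B†).domRestrict B.domain) y₀, ((B†).domRestrict B.domain) wA⟫ := by
    have h := hBinner x₀ wB
    have h2 : ((B†).domRestrict B.domain) x₀A = (B†) ⟨(x₀ : H), hBsub x₀.2⟩ :=
      domRestrict_apply rfl
    have h3 : ((B†).domRestrict B.domain) wA = (B†) ⟨(wB : H), hBsub wB.2⟩ :=
      domRestrict_apply rfl
    rw [h2, h3, ← h, key, h3]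
  -- A w = 0
  have hAw : ((B†).domRestrict B.domain) wA = 0 := by
    have hsub : x₀A - y₀ = wA := by
      apply Subtype.ext
      simp [x₀A, wA, wB]
      rfl
    have hz : ⟪((B†).domRestrict B.domain) wA, ((B†).domRestrict B.domain) wA⟫ = 0 := by
      calc ⟪((B†).domRestrict B.domain) wA, ((B†).domRestrict B.domain) wA⟫
          = ⟪((B†).domRestrict B.domain) x₀A - ((B†).domRestrict B.domain) y₀,
              ((B†).domRestrict B.domain) wA⟫ := by
            rw [← LinearPMap.map_sub, hsub]
        _ = ⟪((B†).domRestrict B.domain) x₀A, ((B†).domRestrict B.domain) wA⟫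
              - ⟪((B†).domRestrict B.domain) y₀, ((B†).domRestrict B.domain) wA⟫ := by
            rw [inner_sub_left]
        _ = 0 := by rw [key2, sub_self]
    exact inner_self_eq_zero.mp hz
  -- B w = 0
  have hBw : B wB = 0 := by
    have h1 : ‖B wB‖ = ‖(B†) ⟨(wB : H), hBsub wB.2⟩‖ := hBnorm wB wB.2
    have h2 : ((B†).domRestrict B.domain) wA = (B†) ⟨(wB : H), hBsub wB.2⟩ :=
      domRestrict_apply rfl
    rw [← h2, hAw, norm_zero] at h1
    exact norm_eq_zero.mp h1
  exact (mem_graph_iff _).mpr ⟨wB, hwBcoe, hBw⟩
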